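/- Suppose there exists A > 0 with d(θ,θ') ≤ √n · A · ‖θ − θ'‖₂ for all θ, θ' ∈ Θ. Then for every ε > 0, the packing number satisfies D(Θ, d, ε) ≤ ( e + e·l·ε² / (8·n·M²·A²) )^{16·n·M²·A²/ε² + 1}. -/

import Mathlib

open MeasureTheory Real

/-- The packing number `D(A, d, ε)`: the maximal cardinality of a subset of `A` whose
points have pairwise `d`-distance strictly greater than `ε`. -/
noncomputable def packingNumber {X : Type*} (d : X → X → ℝ) (A : Set X) (ε : ℝ) : ℕ :=
  sSup {m : ℕ | ∃ S : Finset X, ↑S ⊆ A ∧ (∀ s ∈ S, ∀ t ∈ S, s ≠ t → ε < d s t) ∧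
    S.card = m}

lemma pow_self_le_exp_mul_factorial (k : ℕ) :
    (k : ℝ) ^ k ≤ Real.exp 1 ^ k * (Nat.factorial k : ℝ) := by
  induction k with
  | zero => simp
  | succ k ih =>
    have hstep : ((k : ℝ) + 1) ^ k ≤ Real.exp 1 * (k : ℝ) ^ k := by
      rcases Nat.eq_zero_or_pos k with h | h
      · subst h; simpa using Real.one_le_exp (by norm_num)
      · have hk0 : (0 : ℝ) < k := by exact_mod_cast h
        have h1 : (k : ℝ) + 1 = (k : ℝ) * (1 + 1 / k) := by field_simp
        have h2 : (1 + 1 / (k : ℝ)) ^ k ≤ Real.exp 1 := by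
          have ha : (1 : ℝ) + 1 / k ≤ Real.exp (1 / k) := by
            have := Real.add_one_le_exp (1 / (k : ℝ)); linarith
          calc (1 + 1 / (k : ℝ)) ^ k ≤ Real.exp (1 / k) ^ k := by
                apply pow_le_pow_left₀ (by positivity) ha
            _ = Real.exp 1 := by
                rw [← Real.exp_nat_mul]; congr 1; field_simp
        calc ((k : ℝ) + 1) ^ k = (k : ℝ) ^ k * (1 + 1 / k) ^ k := by rw [h1, mul_pow]
          _ ≤ (k : ℝ) ^ k * Real.exp 1 := by
              apply mul_le_mul_of_nonneg_left h2 (by positivity)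
          _ = Real.exp 1 * (k : ℝ) ^ k := by ring
    have hk1 : (0 : ℝ) ≤ (k : ℝ) + 1 := by positivity
    calc ((k + 1 : ℕ) : ℝ) ^ (k + 1) = ((k : ℝ) + 1) * ((k : ℝ) + 1) ^ k := by push_cast; ring
      _ ≤ ((k : ℝ) + 1) * (Real.exp 1 * (k : ℝ) ^ k) := by
          apply mul_le_mul_of_nonneg_left hstep hk1
      _ ≤ ((k : ℝ) + 1) * (Real.exp 1 * (Real.exp 1 ^ k * (Nat.factorial k : ℝ))) := by
          apply mul_le_mul_of_nonneg_left _ hk1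
          apply mul_le_mul_of_nonneg_left ih (Real.exp_pos 1).le
      _ = Real.exp 1 ^ (k + 1) * ((Nat.factorial (k + 1) : ℝ)) := by
          rw [Nat.factorial_succ]; push_cast; ring


noncomputable def mVec (l : ℕ) (M : ℝ) : Option (Fin l × Bool) → EuclideanSpace ℝ (Fin l) :=
  fun a => Option.elim a 0 (fun jb => (if jb.2 then M else -M) • EuclideanSpace.single jb.1 (1 : ℝ))

lemma esum_apply {l : ℕ} {ι : Type*} (s : Finset ι) (f : ι → EuclideanSpace ℝ (Fin l))
    (j : Fin l) : (∑ i ∈ s, f i) j = ∑ i ∈ s, f i j := by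
  classical
  induction s using Finset.induction with
  | empty => rfl
  | insert a s h ih => rw [Finset.sum_insert h, Finset.sum_insert h, PiLp.add_apply, ih]

lemma mVec_norm_sq {l : ℕ} {M : ℝ} (hM : 0 ≤ M) (jb : Fin l × Bool) :
    ‖mVec l M (some jb)‖ ^ 2 = M ^ 2 := by
  simp only [mVec, Option.elim, norm_smul, EuclideanSpace.norm_single]
  rcases jb with ⟨j, b⟩
  cases b <;> simp [abs_of_nonneg hM, abs_of_nonpos (neg_nonpos.mpr hM)]

lemma max_add_max_neg (x : ℝ) : max x 0 + max (-x) 0 = |x| := by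
  rcases le_total 0 x with h | h
  · rw [max_eq_left h, max_eq_right (neg_nonpos.mpr h), abs_of_nonneg h]; ring
  · rw [max_eq_right h, max_eq_left (neg_nonneg.mpr h), abs_of_nonpos h]; ring

lemma max_sub_max_neg (x : ℝ) : max x 0 - max (-x) 0 = x := by
  rcases le_total 0 x with h | h
  · rw [max_eq_left h, max_eq_right (neg_nonpos.mpr h)]; ring
  · rw [max_eq_right h, max_eq_left (neg_nonneg.mpr h)]; ring

lemma maurey (l : ℕ) (M : ℝ) (hM : 0 < M) (θ : EuclideanSpace ℝ (Fin l))
    (hθ : ∑ j, |θ j| ≤ M) (k : ℕ) :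
    ∃ f : Fin k → Option (Fin l × Bool),
      ‖(∑ i, mVec l M (f i)) - (k : ℝ) • θ‖ ^ 2 ≤ k * M ^ 2 := by
  classical
  -- the weights
  set w : Option (Fin l × Bool) → ℝ := fun a =>
    Option.elim a (1 - (∑ j, |θ j|) / M)
      (fun jb => (cond jb.2 (max (θ jb.1) 0) (max (-(θ jb.1)) 0)) / M) with hw
  have hw0 : ∀ a, 0 ≤ w a := by
    rintro (_ | ⟨j, b⟩)
    · simp only [hw, Option.elim]
      have : (∑ j, |θ j|) / M ≤ 1 := by
        rw [div_le_one hM]; exact hθ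
      linarith
    · simp only [hw, Option.elim]
      cases b <;> simp only [Bool.cond_true, Bool.cond_false] <;> positivity
  have hw1 : ∑ a, w a = 1 := by
    rw [Fintype.sum_option, Fintype.sum_prod_type]
    have : ∀ j : Fin l, ∑ b : Bool, w (some (j, b)) = |θ j| / M := by
      intro j
      rw [Fintype.sum_bool]
      simp only [hw, Option.elim, Bool.cond_true, Bool.cond_false]
      rw [← add_div, max_add_max_neg]
    rw [Finset.sum_congr rfl (fun j _ => this j)]
    simp only [hw, Option.elim]
    rw [← Finset.sum_div]
    field_simp
    ring
  have hwv : ∑ a, w a • mVec l M a = θ := by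
    ext j₀
    rw [esum_apply]
    have hterm : ∀ a, (w a • mVec l M a) j₀ = w a * mVec l M a j₀ := fun a => rfl
    simp only [hterm]
    rw [Fintype.sum_option, Fintype.sum_prod_type]
    have hnone : w none * mVec l M none j₀ = 0 := by simp [mVec]
    have hsome : ∀ j : Fin l, ∑ b : Bool, w (some (j, b)) * mVec l M (some (j, b)) j₀
        = if j₀ = j then θ j else 0 := by
      intro j
      rw [Fintype.sum_bool]
      simp only [hw, Option.elim, mVec, Bool.cond_true, Bool.cond_false, if_true, if_false,
        PiLp.smul_apply, EuclideanSpace.single_apply, smul_eq_mul]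
      by_cases h : j₀ = j
      · simp only [h, if_true, Bool.false_eq_true, if_false]
        field_simp
        linear_combination max_sub_max_neg (θ j)
      · simp [h]
    rw [hnone, zero_add, Finset.sum_congr rfl (fun j _ => hsome j)]
    simp
  have hwn : ∑ a, w a * ‖mVec l M a‖ ^ 2 ≤ M ^ 2 := by
    rw [Fintype.sum_option]
    have hnone : w none * ‖mVec l M none‖ ^ 2 = 0 := by simp [mVec]
    have hsome : ∀ jb : Fin l × Bool, w (some jb) * ‖mVec l M (some jb)‖ ^ 2
        = w (some jb) * M ^ 2 := fun jb => by rw [mVec_norm_sq hM.le]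
    rw [hnone, zero_add, Finset.sum_congr rfl (fun jb _ => hsome jb), ← Finset.sum_mul]
    have hsum : ∑ jb : Fin l × Bool, w (some jb) = (∑ j, |θ j|) / M := by
      rw [Fintype.sum_prod_type]
      have : ∀ j : Fin l, ∑ b : Bool, w (some (j, b)) = |θ j| / M := by
        intro j
        rw [Fintype.sum_bool]
        simp only [hw, Option.elim, Bool.cond_true, Bool.cond_false]
        rw [← add_div, max_add_max_neg]
      rw [Finset.sum_congr rfl (fun j _ => this j), ← Finset.sum_div]
    rw [hsum]
    rw [div_mul_eq_mul_div, div_le_iff₀ hM]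
    have h1 : (∑ j, |θ j|) ≤ M := hθ
    have h2 : (0 : ℝ) ≤ M ^ 2 := by positivity
    calc (∑ j, |θ j|) * M ^ 2 ≤ M * M ^ 2 := by
          apply mul_le_mul_of_nonneg_right h1 h2
      _ = M ^ 2 * M := by ring
  -- induction on k
  induction k with
  | zero =>
    refine ⟨fun i => none, ?_⟩
    simp
  | succ k ih =>
    obtain ⟨f, hf⟩ := ih
    set u : EuclideanSpace ℝ (Fin l) := (∑ i, mVec l M (f i)) - (k : ℝ) • θ with hu
    -- average of the candidate values
    have havg : ∑ a, w a * ‖u + (mVec l M a - θ)‖ ^ 2 ≤ (k + 1) * M ^ 2 := by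
      have hexp : ∀ a, w a * ‖u + (mVec l M a - θ)‖ ^ 2
          = w a * ‖u‖ ^ 2 + 2 * (w a * inner ℝ u (mVec l M a - θ)) + w a * ‖mVec l M a - θ‖ ^ 2 := by
        intro a
        rw [norm_add_sq_real]
        ring
      rw [Finset.sum_congr rfl (fun a _ => hexp a)]
      rw [Finset.sum_add_distrib, Finset.sum_add_distrib]
      have e1 : ∑ a, w a * ‖u‖ ^ 2 = ‖u‖ ^ 2 := by
        rw [← Finset.sum_mul, hw1, one_mul]
      have e2 : ∑ a, 2 * (w a * inner ℝ u (mVec l M a - θ)) = 0 := by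
        rw [← Finset.mul_sum]
        have : ∑ a, w a * (inner ℝ u (mVec l M a - θ) : ℝ)
            = inner ℝ u (∑ a, w a • (mVec l M a - θ)) := by
          rw [inner_sum]
          exact Finset.sum_congr rfl (fun a _ => (real_inner_smul_right _ _ _).symm)
        rw [this]
        have hz : ∑ a, w a • (mVec l M a - θ) = 0 := by
          have : ∀ a, w a • (mVec l M a - θ) = w a • mVec l M a - w a • θ :=
            fun a => smul_sub _ _ _
          rw [Finset.sum_congr rfl (fun a _ => this a), Finset.sum_sub_distrib, hwv,
            ← Finset.sum_smul, hw1, one_smul, sub_self]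
        rw [hz, inner_zero_right, mul_zero]
      have e3 : ∑ a, w a * ‖mVec l M a - θ‖ ^ 2 ≤ M ^ 2 := by
        have hexp2 : ∀ a, w a * ‖mVec l M a - θ‖ ^ 2
            = w a * ‖mVec l M a‖ ^ 2 - 2 * (w a * inner ℝ (mVec l M a) θ) + w a * ‖θ‖ ^ 2 := by
          intro a
          rw [norm_sub_sq_real]
          ring
        rw [Finset.sum_congr rfl (fun a _ => hexp2 a), Finset.sum_add_distrib,
          Finset.sum_sub_distrib]
        have f1 : ∑ a, w a * ‖θ‖ ^ 2 = ‖θ‖ ^ 2 := by rw [← Finset.sum_mul, hw1, one_mul]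
        have f2 : ∑ a, 2 * (w a * (inner ℝ (mVec l M a) θ : ℝ)) = 2 * ‖θ‖ ^ 2 := by
          rw [← Finset.mul_sum]
          have : ∑ a, w a * (inner ℝ (mVec l M a) θ : ℝ)
              = inner ℝ (∑ a, w a • mVec l M a) θ := by
            rw [sum_inner]
            exact Finset.sum_congr rfl (fun a _ => (real_inner_smul_left _ _ _).symm)
          rw [this, hwv, real_inner_self_eq_norm_sq]
        rw [f1, f2]
        linarith [hwn, sq_nonneg ‖θ‖]
      rw [e1, e2]
      linarith [hf, e3]
    -- extract a good symbol
    have hex : ∃ a, ‖u + (mVec l M a - θ)‖ ^ 2 ≤ (k + 1) * M ^ 2 := by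
      by_contra hcon
      push_neg at hcon
      obtain ⟨a₀, ha₀⟩ : ∃ a₀, 0 < w a₀ := by
        by_contra hz
        push_neg at hz
        have : ∑ a, w a = 0 :=
          Finset.sum_eq_zero (fun a _ => le_antisymm (hz a) (hw0 a))
        rw [hw1] at this
        norm_num at this
      have hlt : ∑ a, w a * ((k + 1) * M ^ 2) < ∑ a, w a * ‖u + (mVec l M a - θ)‖ ^ 2 := by
        apply Finset.sum_lt_sum
        · intro a _
          exact mul_le_mul_of_nonneg_left (hcon a).le (hw0 a)
        · exact ⟨a₀, Finset.mem_univ a₀, mul_lt_mul_of_pos_left (hcon a₀) ha₀⟩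
      rw [← Finset.sum_mul, hw1, one_mul] at hlt
      linarith [havg]
    obtain ⟨a, ha⟩ := hex
    set g : Fin (k + 1) → Option (Fin l × Bool) := Fin.cons a f with hg
    refine ⟨g, ?_⟩
    have hsum : ∑ i : Fin (k + 1), mVec l M (g i)
        = mVec l M a + ∑ i : Fin k, mVec l M (f i) := by
      rw [Fin.sum_univ_succ]
      simp [hg, Fin.cons_zero, Fin.cons_succ]
    have hrearr : (∑ i : Fin (k + 1), mVec l M (g i)) - ((k + 1 : ℕ) : ℝ) • θ
        = u + (mVec l M a - θ) := by
      rw [hsum, hu]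
      push_cast
      rw [add_smul, one_smul]
      abel
    rw [hrearr]
    push_cast
    exact ha



/-- The packing-number estimate of Section 2.2: if `d(θ,θ') ≤ √n A ‖θ−θ'‖₂` on
`Θ = {θ : ‖θ‖₁ ≤ M}` with `A > 0`, then for every `ε > 0`,
`D(Θ, d, ε) ≤ (e + e l ε² / (8 n M² A²)) ^ (16 n M² A² / ε² + 1)`. -/
theorem packing_number_bound
    (n l : ℕ) (hn : 0 < n) (hl : 0 < l) (M : ℝ) (hM : 0 < M)
    (𝔛 : Type*) (x : Fin n → 𝔛) (φ : (Fin l → ℝ) → 𝔛 → ℝ)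
    (A : ℝ) (hA : 0 < A)
    (hcontr : ∀ θ θ' : Fin l → ℝ, (∑ j, |θ j|) ≤ M → (∑ j, |θ' j|) ≤ M →
      Real.sqrt (∑ i, (φ θ (x i) - φ θ' (x i))^2)
        ≤ Real.sqrt n * A * Real.sqrt (∑ j, (θ j - θ' j)^2))
    (ε : ℝ) (hε : 0 < ε) :
    (packingNumber (fun θ θ' : Fin l → ℝ => Real.sqrt (∑ i, (φ θ (x i) - φ θ' (x i))^2))
        {θ : Fin l → ℝ | (∑ j, |θ j|) ≤ M} ε : ℝ)
      ≤ (Real.exp 1 + Real.exp 1 * l * ε^2 / (8 * n * M^2 * A^2))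
          ^ ((16 * n * M^2 * A^2 / ε^2 + 1) : ℝ) := by
  classical
  have hn' : (0 : ℝ) < n := by exact_mod_cast hn
  set Kr : ℝ := 16 * n * M ^ 2 * A ^ 2 / ε ^ 2 with hKr
  have hKpos : 0 < Kr := by positivity
  set k : ℕ := ⌈Kr⌉₊ with hkdef
  have hk0 : 0 < k := Nat.ceil_pos.mpr hKpos
  have hk0' : (0 : ℝ) < k := by exact_mod_cast hk0
  have hKk : Kr ≤ k := Nat.le_ceil Kr
  have hkK : (k : ℝ) ≤ Kr + 1 := (Nat.ceil_lt_add_one hKpos.le).le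
  set N : ℕ := (2 * l + k).choose k with hN
  -- auxiliary: transfer the ℓ¹ bound to EuclideanSpace coordinates
  have hMk : ∀ θ : Fin l → ℝ, (∑ j, |θ j|) ≤ M →
      ∑ j, |((WithLp.equiv 2 (Fin l → ℝ)).symm θ) j| ≤ M := by
    intro θ h
    simpa [WithLp.equiv_symm_apply, PiLp.toLp_apply] using h
  -- the chooser map into Sym
  set F : (Fin l → ℝ) → Sym (Option (Fin l × Bool)) k := fun θ =>
    if h : (∑ j, |θ j|) ≤ M then
      ⟨Multiset.map (Classical.choose
          (maurey l M hM ((WithLp.equiv 2 (Fin l → ℝ)).symm θ) (hMk θ h) k)) Finset.univ.val,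
        by simp⟩
    else ⟨Multiset.replicate k none, by simp⟩ with hF
  have hbound : ∀ S : Finset (Fin l → ℝ), ↑S ⊆ {θ : Fin l → ℝ | (∑ j, |θ j|) ≤ M} →
      (∀ s ∈ S, ∀ t ∈ S, s ≠ t → ε < Real.sqrt (∑ i, (φ s (x i) - φ t (x i))^2)) →
      S.card ≤ N := by
    intro S hsub hsep
    have hinj : Set.InjOn F ↑S := by
      intro s hs t ht hFst
      by_contra hst
      have hsM : (∑ j, |s j|) ≤ M := hsub hs
      have htM : (∑ j, |t j|) ≤ M := hsub ht
      set s' := (WithLp.equiv 2 (Fin l → ℝ)).symm s with hs'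
      set t' := (WithLp.equiv 2 (Fin l → ℝ)).symm t with ht'
      set q : ℝ := ‖s' - t'‖ with hq
      have hq0 : 0 ≤ q := norm_nonneg _
      -- separation in euclidean norm
      have hεq : ε < Real.sqrt n * A * q := by
        have h1 := hsep s hs t ht hst
        have h2 := hcontr s t hsM htM
        have h3 : Real.sqrt (∑ j, (s j - t j) ^ 2) = q := by
          rw [hq, EuclideanSpace.norm_eq]
          congr 1
          apply Finset.sum_congr rfl
          intro j _
          rw [PiLp.sub_apply, hs', ht', WithLp.equiv_symm_apply, PiLp.toLp_apply, PiLp.toLp_apply,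
            Real.norm_eq_abs, sq_abs]
        rw [h3] at h2
        linarith
      -- the chosen approximations coincide
      set fs := Classical.choose (maurey l M hM s' (hMk s hsM) k) with hfs
      set ft := Classical.choose (maurey l M hM t' (hMk t htM) k) with hft
      have hcs := Classical.choose_spec (maurey l M hM s' (hMk s hsM) k)
      have hct := Classical.choose_spec (maurey l M hM t' (hMk t htM) k)
      rw [← hfs] at hcs
      rw [← hft] at hct
      have hms : Multiset.map fs Finset.univ.val = Multiset.map ft Finset.univ.val := by
        have h1 : F s = ⟨Multiset.map fs Finset.univ.val, by simp⟩ := by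
          rw [hF]; exact dif_pos hsM
        have h2 : F t = ⟨Multiset.map ft Finset.univ.val, by simp⟩ := by
          rw [hF]; exact dif_pos htM
        rw [h1, h2] at hFst
        exact Subtype.mk_eq_mk.mp hFst
      have hsums : (∑ i, mVec l M (fs i)) = ∑ i, mVec l M (ft i) := by
        have e1 : (∑ i, mVec l M (fs i))
            = ((Multiset.map fs Finset.univ.val).map (mVec l M)).sum := by
          rw [Multiset.map_map]; rfl
        have e2 : (∑ i, mVec l M (ft i))
            = ((Multiset.map ft Finset.univ.val).map (mVec l M)).sum := by
          rw [Multiset.map_map]; rfl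
        rw [e1, e2, hms]
      set c := ∑ i, mVec l M (fs i) with hc
      rw [← hsums] at hct
      -- norms
      have hns : ‖(k : ℝ) • s' - c‖ ≤ Real.sqrt k * M := by
        rw [← norm_sub_rev]
        rw [← Real.sqrt_sq (norm_nonneg (c - (k : ℝ) • s'))]
        calc Real.sqrt (‖c - (k : ℝ) • s'‖ ^ 2) ≤ Real.sqrt (k * M ^ 2) :=
              Real.sqrt_le_sqrt hcs
          _ = Real.sqrt k * M := by
              rw [Real.sqrt_mul (by positivity), Real.sqrt_sq hM.le]
      have hnt : ‖c - (k : ℝ) • t'‖ ≤ Real.sqrt k * M := by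
        rw [← Real.sqrt_sq (norm_nonneg (c - (k : ℝ) • t'))]
        calc Real.sqrt (‖c - (k : ℝ) • t'‖ ^ 2) ≤ Real.sqrt (k * M ^ 2) :=
              Real.sqrt_le_sqrt hct
          _ = Real.sqrt k * M := by
              rw [Real.sqrt_mul (by positivity), Real.sqrt_sq hM.le]
      have htri : (k : ℝ) * q ≤ 2 * Real.sqrt k * M := by
        have h1 : ‖(k : ℝ) • s' - (k : ℝ) • t'‖ ≤ ‖(k : ℝ) • s' - c‖ + ‖c - (k : ℝ) • t'‖ :=
          norm_sub_le_norm_sub_add_norm_sub _ _ _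
        have h2 : ‖(k : ℝ) • s' - (k : ℝ) • t'‖ = (k : ℝ) * q := by
          rw [← smul_sub, norm_smul, Real.norm_eq_abs, abs_of_nonneg (by positivity), hq]
        rw [h2] at h1
        linarith
      -- contradiction
      clear hns hnt hcs hct hsums hms hc
      clear c
      clear hfs hft
      clear fs ft
      clear hFst hF F hMk hcontr hsep hsub
      have hsq1 : ε ^ 2 < n * (A ^ 2 * q ^ 2) := by
        have h1 : ε ^ 2 < (Real.sqrt n * A * q) ^ 2 :=
          pow_lt_pow_left₀ hεq hε.le two_ne_zero
        have h2 : (Real.sqrt n * A * q) ^ 2 = n * (A ^ 2 * q ^ 2) := by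
          rw [mul_pow, mul_pow, Real.sq_sqrt hn'.le]; ring
        linarith
      have hsq2 : (k : ℝ) ^ 2 * q ^ 2 ≤ 4 * k * M ^ 2 := by
        have h1 : ((k : ℝ) * q) ^ 2 ≤ (2 * Real.sqrt k * M) ^ 2 :=
          pow_le_pow_left₀ (by positivity) htri 2
        have h2 : (2 * Real.sqrt k * M) ^ 2 = 4 * k * M ^ 2 := by
          rw [mul_pow, mul_pow, Real.sq_sqrt hk0'.le]; ring
        have h3 : ((k : ℝ) * q) ^ 2 = (k : ℝ) ^ 2 * q ^ 2 := by ring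
        linarith
      have e4 : (k : ℝ) * ε ^ 2 < 4 * n * A ^ 2 * M ^ 2 := by
        have h1 : (k : ℝ) ^ 2 * ε ^ 2 < (k : ℝ) ^ 2 * (n * (A ^ 2 * q ^ 2)) :=
          mul_lt_mul_of_pos_left hsq1 (by positivity)
        have h2 : (k : ℝ) ^ 2 * (n * (A ^ 2 * q ^ 2)) = (n * A ^ 2) * ((k : ℝ) ^ 2 * q ^ 2) := by
          ring
        have h3 : (n * A ^ 2) * ((k : ℝ) ^ 2 * q ^ 2) ≤ (n * A ^ 2) * (4 * k * M ^ 2) :=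
          mul_le_mul_of_nonneg_left hsq2 (by positivity)
        have h4 : (k : ℝ) ^ 2 * ε ^ 2 < (n * A ^ 2) * (4 * k * M ^ 2) := by linarith
        have h4' : (k : ℝ) * ((k : ℝ) * ε ^ 2) < (k : ℝ) * (4 * n * A ^ 2 * M ^ 2) := by
          have e1 : (k : ℝ) * ((k : ℝ) * ε ^ 2) = (k : ℝ) ^ 2 * ε ^ 2 := by ring
          have e2 : (k : ℝ) * (4 * n * A ^ 2 * M ^ 2) = (n * A ^ 2) * (4 * k * M ^ 2) := by ring
          linarith
        exact lt_of_mul_lt_mul_left h4' hk0'.le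
      have e5 : 16 * n * M ^ 2 * A ^ 2 ≤ (k : ℝ) * ε ^ 2 := by
        have h1 : Kr * ε ^ 2 ≤ (k : ℝ) * ε ^ 2 :=
          mul_le_mul_of_nonneg_right hKk (by positivity)
        have h2 : Kr * ε ^ 2 = 16 * n * M ^ 2 * A ^ 2 := by
          rw [hKr, div_mul_cancel₀ _ (ne_of_gt (pow_pos hε 2))]
        linarith
      have hpos : (0 : ℝ) < 12 * n * M ^ 2 * A ^ 2 := by positivity
      have hlt : 16 * n * M ^ 2 * A ^ 2 < 4 * n * A ^ 2 * M ^ 2 := lt_of_le_of_lt e5 e4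
      linarith
    have h1 : S.card ≤ Fintype.card (Sym (Option (Fin l × Bool)) k) := by
      have := Finset.card_le_card_of_injOn F (fun a _ => Finset.mem_univ (F a)) hinj
      simpa using this
    have h2 : Fintype.card (Sym (Option (Fin l × Bool)) k) = N := by
      rw [Sym.card_sym_eq_choose, hN]
      congr 1
      simp
      omega
    omega
  -- bound the packing number
  have hPN : packingNumber (fun θ θ' : Fin l → ℝ =>
      Real.sqrt (∑ i, (φ θ (x i) - φ θ' (x i))^2))
      {θ : Fin l → ℝ | (∑ j, |θ j|) ≤ M} ε ≤ N := by
    apply csSup_le'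
    rintro m ⟨S, hsub, hsep, rfl⟩
    exact hbound S hsub hsep
  have hcast : (packingNumber (fun θ θ' : Fin l → ℝ =>
      Real.sqrt (∑ i, (φ θ (x i) - φ θ' (x i))^2))
      {θ : Fin l → ℝ | (∑ j, |θ j|) ≤ M} ε : ℝ) ≤ N := by exact_mod_cast hPN
  -- final numeric chain
  set B : ℝ := Real.exp 1 + Real.exp 1 * l * ε ^ 2 / (8 * n * M ^ 2 * A ^ 2) with hB
  have hB1 : 1 ≤ B := by
    have h1 : (1 : ℝ) ≤ Real.exp 1 := by
      have := Real.add_one_le_exp (1 : ℝ); linarith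
    have h2 : 0 ≤ Real.exp 1 * l * ε ^ 2 / (8 * n * M ^ 2 * A ^ 2) := by positivity
    rw [hB]
    linarith
  have hstep1 : (N : ℝ) ≤ ((2 * l + k : ℕ) : ℝ) ^ k / (Nat.factorial k : ℝ) := by
    rw [hN]; exact Nat.choose_le_pow_div k (2 * l + k)
  have hstep2 : ((2 * l + k : ℕ) : ℝ) ^ k / (Nat.factorial k : ℝ)
      ≤ (Real.exp 1 * ((2 * l + k : ℕ) : ℝ) / k) ^ k := by
    rw [div_pow, mul_pow]
    rw [div_le_div_iff₀ (by positivity) (by positivity)]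
    calc ((2 * l + k : ℕ) : ℝ) ^ k * (k : ℝ) ^ k
        ≤ ((2 * l + k : ℕ) : ℝ) ^ k * (Real.exp 1 ^ k * (Nat.factorial k : ℝ)) :=
          mul_le_mul_of_nonneg_left (pow_self_le_exp_mul_factorial k) (by positivity)
      _ = Real.exp 1 ^ k * ((2 * l + k : ℕ) : ℝ) ^ k * (Nat.factorial k : ℝ) := by ring
  have hstep3 : Real.exp 1 * ((2 * l + k : ℕ) : ℝ) / k ≤ B := by
    have hkne : (k : ℝ) ≠ 0 := ne_of_gt hk0'
    have h1 : Real.exp 1 * ((2 * l + k : ℕ) : ℝ) / k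
        = Real.exp 1 + Real.exp 1 * (2 * l) / k := by
      push_cast
      field_simp
      ring
    have h2 : Real.exp 1 * (2 * l) / (k : ℝ) ≤ Real.exp 1 * (2 * l) / Kr :=
      div_le_div_of_nonneg_left (by positivity) hKpos hKk
    have h3 : Real.exp 1 * (2 * l) / Kr = Real.exp 1 * l * ε ^ 2 / (8 * n * M ^ 2 * A ^ 2) := by
      rw [hKr]
      field_simp
      ring
    rw [h1, hB]
    linarith
  have hstep4 : (Real.exp 1 * ((2 * l + k : ℕ) : ℝ) / k) ^ k ≤ B ^ k :=
    pow_le_pow_left₀ (by positivity) hstep3 k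
  have hstep5 : B ^ k = B ^ ((k : ℕ) : ℝ) := (Real.rpow_natCast B k).symm
  have hstep6 : B ^ ((k : ℕ) : ℝ) ≤ B ^ (Kr + 1) :=
    Real.rpow_le_rpow_of_exponent_le hB1 hkK
  calc (packingNumber (fun θ θ' : Fin l → ℝ =>
      Real.sqrt (∑ i, (φ θ (x i) - φ θ' (x i))^2))
      {θ : Fin l → ℝ | (∑ j, |θ j|) ≤ M} ε : ℝ) ≤ N := hcast
    _ ≤ ((2 * l + k : ℕ) : ℝ) ^ k / (Nat.factorial k : ℝ) := hstep1
    _ ≤ (Real.exp 1 * ((2 * l + k : ℕ) : ℝ) / k) ^ k := hstep2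
    _ ≤ B ^ k := hstep4
    _ = B ^ ((k : ℕ) : ℝ) := hstep5
    _ ≤ B ^ (Kr + 1) := hstep6
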